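/- Let Λ be an M×M positive definite diagonal matrix, Ψ an M×N real matrix, λ > 0. Define K = Ψᵀ Λ Ψ, R = (K + λN I_N)⁻¹, M₀ = Ψᵀ Λ² Ψ, Δ = (1/N) Ψ Ψᵀ − I_M, and B = (I_M + Δ + λ Λ⁻¹)⁻¹. Then Tr(R M₀ R) = (1/N) · Tr(B² (I_M + Δ)). -/
import Mathlib

open Matrix

theorem stmt_3 (M N : ℕ) (hN : 0 < N) (lam : Fin M → ℝ) (hlam : ∀ k, 0 < lam k)
    (Ψ : Matrix (Fin M) (Fin N) ℝ) (l : ℝ) (hl : 0 < l) :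
    let Λ : Matrix (Fin M) (Fin M) ℝ := Matrix.diagonal lam
    let K : Matrix (Fin N) (Fin N) ℝ := Ψᵀ * Λ * Ψ
    let R : Matrix (Fin N) (Fin N) ℝ := (K + (l * (N : ℝ)) • (1 : Matrix (Fin N) (Fin N) ℝ))⁻¹
    let M₀ : Matrix (Fin N) (Fin N) ℝ := Ψᵀ * (Λ ^ 2) * Ψ
    let Δ : Matrix (Fin M) (Fin M) ℝ := ((N : ℝ)⁻¹) • (Ψ * Ψᵀ) - 1
    let B : Matrix (Fin M) (Fin M) ℝ := (1 + Δ + l • Λ⁻¹)⁻¹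
    (R * M₀ * R).trace = ((N : ℝ)⁻¹) * (B ^ 2 * (1 + Δ)).trace := by
  intro Λ K R M₀ Δ B
  have hNR : (0:ℝ) < (N:ℝ) := Nat.cast_pos.2 hN
  obtain ⟨c, hcdef⟩ : ∃ x : ℝ, x = l * (N:ℝ) := ⟨_, rfl⟩
  have hc0 : 0 < c := hcdef ▸ mul_pos hl hNR
  obtain ⟨S, hSdef⟩ : ∃ X : Matrix (Fin M) (Fin M) ℝ,
      X = Matrix.diagonal (fun k => Real.sqrt (lam k)) := ⟨_, rfl⟩
  obtain ⟨T, hTdef⟩ : ∃ X : Matrix (Fin M) (Fin M) ℝ,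
      X = Matrix.diagonal (fun k => (Real.sqrt (lam k))⁻¹) := ⟨_, rfl⟩
  have hsqrt : ∀ k, Real.sqrt (lam k) ≠ 0 := fun k => (Real.sqrt_pos.2 (hlam k)).ne'
  have hST : S * T = 1 := by
    rw [hSdef, hTdef, diagonal_mul_diagonal, ← diagonal_one]
    have : (fun i => Real.sqrt (lam i) * (Real.sqrt (lam i))⁻¹) = fun _ : Fin M => (1:ℝ) :=
      funext fun k => mul_inv_cancel₀ (hsqrt k)
    rw [this]
  have hTS : T * S = 1 := by
    rw [hTdef, hSdef, diagonal_mul_diagonal, ← diagonal_one]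
    have : (fun i => (Real.sqrt (lam i))⁻¹ * Real.sqrt (lam i)) = fun _ : Fin M => (1:ℝ) :=
      funext fun k => inv_mul_cancel₀ (hsqrt k)
    rw [this]
  have hSS : S * S = Λ := by
    rw [hSdef, diagonal_mul_diagonal]
    show _ = Matrix.diagonal lam
    have : (fun i => Real.sqrt (lam i) * Real.sqrt (lam i)) = lam :=
      funext fun k => Real.mul_self_sqrt (hlam k).le
    rw [this]
  have hSΛ : S * Λ = Λ * S := by
    show S * Matrix.diagonal lam = Matrix.diagonal lam * S
    rw [hSdef, diagonal_mul_diagonal, diagonal_mul_diagonal]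
    have : (fun i => Real.sqrt (lam i) * lam i) = fun i => lam i * Real.sqrt (lam i) :=
      funext fun k => mul_comm _ _
    rw [this]
  have hSt : Sᵀ = S := by rw [hSdef, diagonal_transpose]
  obtain ⟨Φ, hΦdef⟩ : ∃ X : Matrix (Fin M) (Fin N) ℝ, X = S * Ψ := ⟨_, rfl⟩
  obtain ⟨P, hPdef⟩ : ∃ X : Matrix (Fin N) (Fin N) ℝ, X = Φᵀ * Φ + c • 1 := ⟨_, rfl⟩
  obtain ⟨Q, hQdef⟩ : ∃ X : Matrix (Fin M) (Fin M) ℝ, X = Φ * Φᵀ + c • 1 := ⟨_, rfl⟩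
  -- positive definiteness and invertibility
  have hc1 : ∀ {n : ℕ}, (c • (1 : Matrix (Fin n) (Fin n) ℝ)).PosDef := by
    intro n
    rw [smul_one_eq_diagonal]
    exact posDef_diagonal_iff.mpr fun _ => hc0
  have hPpd : P.PosDef := by
    have h1 := posSemidef_conjTranspose_mul_self Φ
    rw [conjTranspose_eq_transpose_of_trivial] at h1
    rw [hPdef]
    exact Matrix.PosDef.posSemidef_add h1 hc1
  have hQpd : Q.PosDef := by
    have h1 := posSemidef_self_mul_conjTranspose Φ
    rw [conjTranspose_eq_transpose_of_trivial] at h1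
    rw [hQdef]
    exact Matrix.PosDef.posSemidef_add h1 hc1
  have hPu : IsUnit P.det := isUnit_iff_ne_zero.mpr hPpd.det_pos.ne'
  have hQu : IsUnit Q.det := isUnit_iff_ne_zero.mpr hQpd.det_pos.ne'
  have hPP : P * P⁻¹ = 1 := mul_nonsing_inv _ hPu
  have hPP' : P⁻¹ * P = 1 := nonsing_inv_mul _ hPu
  have hQQ : Q * Q⁻¹ = 1 := mul_nonsing_inv _ hQu
  have hQQ' : Q⁻¹ * Q = 1 := nonsing_inv_mul _ hQu
  -- push-through identity
  have hΦP : Φ * P = Q * Φ := by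
    rw [hPdef, hQdef, Matrix.mul_add, Matrix.add_mul, Matrix.mul_smul, Matrix.smul_mul,
      Matrix.mul_one, Matrix.one_mul, Matrix.mul_assoc]
  have hΦPi : Φ * P⁻¹ = Q⁻¹ * Φ := by
    calc Φ * P⁻¹ = Q⁻¹ * (Q * (Φ * P⁻¹)) := by
          rw [← Matrix.mul_assoc, hQQ', Matrix.one_mul]
      _ = Q⁻¹ * ((Φ * P) * P⁻¹) := by rw [hΦP, Matrix.mul_assoc]
      _ = Q⁻¹ * Φ := by rw [Matrix.mul_assoc, hPP, Matrix.mul_one]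
  -- symmetry of P⁻¹ and Q⁻¹
  have hPt : Pᵀ = P := by
    rw [hPdef, transpose_add, transpose_mul, transpose_transpose, transpose_smul, transpose_one]
  have hQt : Qᵀ = Q := by
    rw [hQdef, transpose_add, transpose_mul, transpose_transpose, transpose_smul, transpose_one]
  have hPit : P⁻¹ᵀ = P⁻¹ := by rw [transpose_nonsing_inv, hPt]
  have hQit : Q⁻¹ᵀ = Q⁻¹ := by rw [transpose_nonsing_inv, hQt]
  have hPiΦt : P⁻¹ * Φᵀ = Φᵀ * Q⁻¹ := by
    have h := congrArg Matrix.transpose hΦPi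
    rw [transpose_mul, transpose_mul, hPit, hQit] at h
    exact h
  -- Q⁻¹ commutes with Φ * Φᵀ
  have hQcomm : Q * (Φ * Φᵀ) = (Φ * Φᵀ) * Q := by
    rw [hQdef, Matrix.add_mul, Matrix.mul_add, Matrix.smul_mul, Matrix.mul_smul,
      Matrix.one_mul, Matrix.mul_one]
  have hQicomm : Q⁻¹ * (Φ * Φᵀ) = (Φ * Φᵀ) * Q⁻¹ := by
    calc Q⁻¹ * (Φ * Φᵀ) = Q⁻¹ * ((Φ * Φᵀ) * (Q * Q⁻¹)) := by rw [hQQ, Matrix.mul_one]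
      _ = Q⁻¹ * (Q * ((Φ * Φᵀ) * Q⁻¹)) := by
          rw [← Matrix.mul_assoc (Φ * Φᵀ) Q Q⁻¹, ← hQcomm, Matrix.mul_assoc]
      _ = (Φ * Φᵀ) * Q⁻¹ := by rw [← Matrix.mul_assoc Q⁻¹ Q ((Φ * Φᵀ) * Q⁻¹), hQQ', Matrix.one_mul]
  -- identify R with P⁻¹
  have hR : R = P⁻¹ := by
    show (Ψᵀ * Λ * Ψ + (l * (N:ℝ)) • 1)⁻¹ = P⁻¹
    rw [← hcdef, hPdef]
    congr 2
    rw [hΦdef, transpose_mul, hSt, ← hSS]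
    rw [Matrix.mul_assoc, Matrix.mul_assoc, Matrix.mul_assoc]
  -- identify M₀
  have hM₀ : M₀ = Φᵀ * Λ * Φ := by
    show Ψᵀ * (Λ ^ 2) * Ψ = Φᵀ * Λ * Φ
    rw [hΦdef, transpose_mul, hSt, pow_two]
    have key : S * Λ * S = Λ * Λ := by rw [hSΛ, Matrix.mul_assoc, hSS]
    rw [← key]
    simp only [Matrix.mul_assoc]
  -- identify 1 + Δ
  have h1Δ : 1 + Δ = ((N:ℝ)⁻¹) • (Ψ * Ψᵀ) := by
    show 1 + (((N:ℝ)⁻¹) • (Ψ * Ψᵀ) - 1) = _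
    abel
  -- Λ⁻¹ = T * T
  have hΛi : Λ⁻¹ = T * T := by
    apply inv_eq_right_inv
    rw [← hSS, Matrix.mul_assoc, ← Matrix.mul_assoc S T T, hST, Matrix.one_mul, hST]
  -- T * Q * T
  have hTΦ : T * Φ = Ψ := by rw [hΦdef, ← Matrix.mul_assoc, hTS, Matrix.one_mul]
  have hΦtT : Φᵀ * T = Ψᵀ := by
    rw [hΦdef, transpose_mul, hSt, Matrix.mul_assoc, hST, Matrix.mul_one]
  have hTQT : T * Q * T = Ψ * Ψᵀ + c • (T * T) := by
    have h5 : T * (Φ * Φᵀ) * T = Ψ * Ψᵀ := by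
      rw [← Matrix.mul_assoc T Φ Φᵀ, hTΦ, Matrix.mul_assoc, hΦtT]
    rw [hQdef, Matrix.mul_add, Matrix.add_mul, Matrix.mul_smul, Matrix.smul_mul,
      Matrix.mul_one, h5]
  have hX : 1 + Δ + l • Λ⁻¹ = ((N:ℝ)⁻¹) • (T * Q * T) := by
    rw [h1Δ, hΛi, hTQT, smul_add, smul_smul]
    congr 2
    rw [hcdef]
    field_simp
  -- identify B
  have hB : B = (N:ℝ) • (S * Q⁻¹ * S) := by
    apply inv_eq_right_inv
    show (1 + Δ + l • Λ⁻¹) * ((N:ℝ) • (S * Q⁻¹ * S)) = 1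
    rw [hX, Matrix.smul_mul, Matrix.mul_smul, smul_smul, inv_mul_cancel₀ hNR.ne', one_smul]
    calc T * Q * T * (S * Q⁻¹ * S)
        = T * (Q * ((T * S) * (Q⁻¹ * S))) := by simp only [Matrix.mul_assoc]
      _ = T * ((Q * Q⁻¹) * S) := by rw [hTS, Matrix.one_mul, Matrix.mul_assoc]
      _ = 1 := by rw [hQQ, Matrix.one_mul, hTS]
  -- the trace computation
  rw [hR, hM₀, hB, h1Δ]
  have hΦΦt : S * (Ψ * Ψᵀ) * S = Φ * Φᵀ := by
    rw [hΦdef, transpose_mul, hSt]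
    simp only [Matrix.mul_assoc]
  rw [pow_two]
  simp only [Matrix.smul_mul, Matrix.mul_smul, trace_smul, smul_eq_mul]
  -- LHS reduction
  have lhs_eq : (P⁻¹ * (Φᵀ * Λ * Φ) * P⁻¹).trace
      = ((Φ * Φᵀ) * (Q⁻¹ * (Q⁻¹ * Λ))).trace := by
    have e1 : P⁻¹ * (Φᵀ * Λ * Φ) * P⁻¹ = (P⁻¹ * Φᵀ * Λ) * (Φ * P⁻¹) := by
      simp only [Matrix.mul_assoc]
    rw [e1, Matrix.trace_mul_comm, hΦPi]
    have e2 : Q⁻¹ * Φ * (P⁻¹ * Φᵀ * Λ) = Q⁻¹ * (Φ * (P⁻¹ * Φᵀ) * Λ) := by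
      simp only [Matrix.mul_assoc]
    rw [e2, hPiΦt, ← Matrix.mul_assoc Φ Φᵀ Q⁻¹, Matrix.trace_mul_comm]
    simp only [Matrix.mul_assoc]
    have e6 : Φ * (Φᵀ * (Q⁻¹ * (Λ * Q⁻¹))) = (Φ * (Φᵀ * (Q⁻¹ * Λ))) * Q⁻¹ := by
      simp only [Matrix.mul_assoc]
    rw [e6, Matrix.trace_mul_comm]
    have e7 : Q⁻¹ * (Φ * (Φᵀ * (Q⁻¹ * Λ))) = (Q⁻¹ * (Φ * Φᵀ)) * (Q⁻¹ * Λ) := by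
      simp only [Matrix.mul_assoc]
    rw [e7, hQicomm]
    simp only [Matrix.mul_assoc]
  -- RHS reduction
  have rhs_eq : ((S * Q⁻¹ * S) * (S * Q⁻¹ * S) * (Ψ * Ψᵀ)).trace
      = ((Φ * Φᵀ) * (Q⁻¹ * (Q⁻¹ * Λ))).trace := by
    have e3 : (S * Q⁻¹ * S) * (S * Q⁻¹ * S) * (Ψ * Ψᵀ)
        = S * (Q⁻¹ * (Λ * (Q⁻¹ * (S * (Ψ * Ψᵀ))))) := by
      simp only [Matrix.mul_assoc]
      rw [← Matrix.mul_assoc S S (Q⁻¹ * (S * (Ψ * Ψᵀ))), hSS]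
    rw [e3, Matrix.trace_mul_comm]
    have e4 : Q⁻¹ * (Λ * (Q⁻¹ * (S * (Ψ * Ψᵀ)))) * S
        = Q⁻¹ * Λ * (Q⁻¹ * (S * (Ψ * Ψᵀ) * S)) := by
      simp only [Matrix.mul_assoc]
    rw [e4, hΦΦt, hQicomm, ← Matrix.mul_assoc (Q⁻¹ * Λ) (Φ * Φᵀ) Q⁻¹,
      Matrix.trace_mul_comm]
    simp only [Matrix.mul_assoc]
    have e8 : Q⁻¹ * (Q⁻¹ * (Λ * (Φ * Φᵀ))) = (Q⁻¹ * (Q⁻¹ * Λ)) * (Φ * Φᵀ) := by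
      simp only [Matrix.mul_assoc]
    rw [e8, Matrix.trace_mul_comm]
    simp only [Matrix.mul_assoc]
  rw [lhs_eq, rhs_eq]
  field_simp
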